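/- Let G = K = ℤ/n with G acting on itself by conjugation (trivially, since abelian). The composite φ ∘ τ₁*: H³(G,𝕋) → MS_G(G) is, under the identifications H³(ℤ/n,𝕋) ≅ ℤ/n and MS_G(G) ≅ H⁴(Tot(B^{*,*}(ℤ/n × ℤ/n, ℤ))) ≅ ℤ/n generated by x⊗x, multiplication by 2: the generator x² ∈ H⁴(ℤ/n,ℤ) pulls back under μ* to x²⊗1 + 2x⊗x + 1⊗x², whose B-component is 2(x⊗x). In particular, for n odd this composite is an isomorphism, and for n even the class n/2 maps to zero. -/

import Mathlib

noncomputable section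

namespace Stmt19

/-- The circle group `𝕋 = ℝ/ℤ`, written additively. -/
abbrev 𝕋 : Type := AddCircle (1 : ℝ)

variable (n : ℕ) [NeZero n]

/-- `G = ℤ/n`, acting on itself by conjugation (i.e. trivially, since it is abelian). -/
abbrev A := ZMod n

/-- `C^{2,1}`-cochains. -/
abbrev C21 := A n → A n → A n → 𝕋
/-- `C^{1,2}`-cochains. -/
abbrev C12 := A n → A n → A n → 𝕋
/-- `C^{1,1}`-cochains. -/
abbrev C11 := A n → A n → 𝕋
/-- `C^{0,2}`-cochains. -/
abbrev C02 := A n → A n → 𝕋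
/-- `C^{3,1}`-cochains. -/
abbrev C31 := A n → A n → A n → A n → 𝕋
/-- `C^{2,2}`-cochains. -/
abbrev C22 := A n → A n → A n → A n → 𝕋
/-- Bar 3-cochains of `G = ℤ/n`. -/
abbrev C3G := A n → A n → A n → 𝕋
/-- Bar 4-cochains of `G = ℤ/n`. -/
abbrev C4G := A n → A n → A n → A n → 𝕋
/-- Bar 2-cochains of `G = ℤ/n`. -/
abbrev C2G := A n → A n → 𝕋

/-- `δ_G : C^{2,1} → C^{3,1}` (the conjugation action on `ℤ/n` is trivial). -/
def dG21 : C21 n →+ C31 n :=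
  AddMonoidHom.mk'
    (fun α g₁ g₂ g₃ k => α g₂ g₃ k - α (g₁ + g₂) g₃ k + α g₁ (g₂ + g₃) k - α g₁ g₂ k)
    (by intro a b; funext g₁ g₂ g₃ k; simp only [Pi.add_apply]; abel)

/-- `δ_K : C^{2,1} → C^{2,2}`. -/
def dK21 : C21 n →+ C22 n :=
  AddMonoidHom.mk'
    (fun α g₁ g₂ x y => α g₁ g₂ y - α g₁ g₂ (x + y) + α g₁ g₂ x)
    (by intro a b; funext g₁ g₂ x y; simp only [Pi.add_apply]; abel)

/-- `δ_G : C^{1,2} → C^{2,2}`. -/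
def dG12 : C12 n →+ C22 n :=
  AddMonoidHom.mk'
    (fun β g₁ g₂ x y => β g₂ x y - β (g₁ + g₂) x y + β g₁ x y)
    (by intro a b; funext g₁ g₂ x y; simp only [Pi.add_apply]; abel)

/-- `δ_G : C^{1,1} → C^{2,1}`. -/
def dG11 : C11 n →+ C21 n :=
  AddMonoidHom.mk'
    (fun χ g₁ g₂ k => χ g₂ k - χ (g₁ + g₂) k + χ g₁ k)
    (by intro a b; funext g₁ g₂ k; simp only [Pi.add_apply]; abel)

/-- `δ_K : C^{1,1} → C^{1,2}`. -/
def dK11 : C11 n →+ C12 n :=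
  AddMonoidHom.mk'
    (fun χ g x y => χ g y - χ g (x + y) + χ g x)
    (by intro a b; funext g x y; simp only [Pi.add_apply]; abel)

/-- `δ_G : C^{0,2} → C^{1,2}`; since the conjugation action of `ℤ/n` on itself is
trivial, `(δ_G κ)[g‖x,y] = κ(x,y) - κ(g•x, g•y) = κ(x,y) - κ(x,y)`. -/
def dG02 : C02 n →+ C12 n :=
  AddMonoidHom.mk'
    (fun κ _g x y => κ x y - κ x y)
    (by intro a b; funext g x y; simp only [Pi.add_apply]; abel)

/-- The degree 3 total differential of the truncated double complex
`A^{*,*}/A^{*,*>2}` (rows `q = 1, 2`). -/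
def d3t : (C21 n × C12 n) →+ (C31 n × C22 n) :=
  AddMonoidHom.mk' (fun t => (dG21 n t.1, dK21 n t.1 + dG12 n t.2))
    (by
      intro a b
      simp only [Prod.fst_add, Prod.snd_add, map_add, Prod.mk_add_mk, Prod.mk.injEq]
      constructor <;> first | trivial | abel)

/-- The degree 2 total differential of the truncated double complex. -/
def d2t : (C11 n × C02 n) →+ (C21 n × C12 n) :=
  AddMonoidHom.mk' (fun t => (dG11 n t.1, dG02 n t.2 - dK11 n t.1))
    (by
      intro a b
      simp only [Prod.fst_add, Prod.snd_add, map_add, Prod.mk_add_mk, Prod.mk.injEq]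
      constructor <;> first | trivial | abel)

/-- Normalized pairs `(α, β)`. -/
def nrm3 : AddSubgroup (C21 n × C12 n) where
  carrier := {t | (∀ g₁ g₂ k, (g₁ = 0 ∨ g₂ = 0 ∨ k = 0) → t.1 g₁ g₂ k = 0) ∧
    (∀ g x y, (g = 0 ∨ x = 0 ∨ y = 0) → t.2 g x y = 0)}
  add_mem' := by
    intro a b ha hb
    refine ⟨fun g₁ g₂ k h => ?_, fun g x y h => ?_⟩
    · simp [Prod.fst_add, Pi.add_apply, ha.1 g₁ g₂ k h, hb.1 g₁ g₂ k h]
    · simp [Prod.snd_add, Pi.add_apply, ha.2 g x y h, hb.2 g x y h]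
  zero_mem' := ⟨fun _ _ _ _ => rfl, fun _ _ _ _ => rfl⟩
  neg_mem' := by
    intro a ha
    refine ⟨fun g₁ g₂ k h => ?_, fun g x y h => ?_⟩
    · simp [Pi.neg_apply, ha.1 g₁ g₂ k h]
    · simp [Pi.neg_apply, ha.2 g x y h]

/-- Normalized pairs `(χ, κ)`. -/
def nrm2 : AddSubgroup (C11 n × C02 n) where
  carrier := {t | (∀ g k, (g = 0 ∨ k = 0) → t.1 g k = 0) ∧
    (∀ x y, (x = 0 ∨ y = 0) → t.2 x y = 0)}
  add_mem' := by
    intro a b ha hb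
    refine ⟨fun g k h => ?_, fun x y h => ?_⟩
    · simp [Prod.fst_add, Pi.add_apply, ha.1 g k h, hb.1 g k h]
    · simp [Prod.snd_add, Pi.add_apply, ha.2 x y h, hb.2 x y h]
  zero_mem' := ⟨fun _ _ _ => rfl, fun _ _ _ => rfl⟩
  neg_mem' := by
    intro a ha
    refine ⟨fun g k h => ?_, fun x y h => ?_⟩
    · simp [Pi.neg_apply, ha.1 g k h]
    · simp [Pi.neg_apply, ha.2 x y h]

/-- Degree 3 normalized cocycles of the truncated total complex. -/
def Z3t : AddSubgroup (C21 n × C12 n) := nrm3 n ⊓ (d3t n).ker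

/-- Degree 3 normalized coboundaries of the truncated total complex. -/
def B3t : AddSubgroup (C21 n × C12 n) := AddSubgroup.map (d2t n) (nrm2 n)

/-- `H³(Tot^*(A^{*,*}/A^{*,*>2}))`. -/
abbrev H3t := Z3t n ⧸ (B3t n).addSubgroupOf (Z3t n)

/-- `δ : C²(G,𝕋) → C³(G,𝕋)`, the bar differential of `G = ℤ/n`. -/
def dG2 : C2G n →+ C3G n :=
  AddMonoidHom.mk'
    (fun u a b c => u b c - u (a + b) c + u a (b + c) - u a b)
    (by intro a b; funext x y z; simp only [Pi.add_apply]; abel)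

/-- `δ : C³(G,𝕋) → C⁴(G,𝕋)`, the bar differential of `G = ℤ/n`. -/
def dG3 : C3G n →+ C4G n :=
  AddMonoidHom.mk'
    (fun w a b c d => w b c d - w (a + b) c d + w a (b + c) d - w a b (c + d) + w a b c)
    (by intro a b; funext x y z u; simp only [Pi.add_apply]; abel)

/-- Normalized 3-cochains of `G`. -/
def nrm3G : AddSubgroup (C3G n) where
  carrier := {w | ∀ a b c, (a = 0 ∨ b = 0 ∨ c = 0) → w a b c = 0}
  add_mem' := by intro a b ha hb x y z h; simp [Pi.add_apply, ha x y z h, hb x y z h]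
  zero_mem' := fun _ _ _ _ => rfl
  neg_mem' := by intro a ha x y z h; simp [Pi.neg_apply, ha x y z h]

/-- Normalized 2-cochains of `G`. -/
def nrm2G : AddSubgroup (C2G n) where
  carrier := {u | ∀ a b, (a = 0 ∨ b = 0) → u a b = 0}
  add_mem' := by intro a b ha hb x y h; simp [Pi.add_apply, ha x y h, hb x y h]
  zero_mem' := fun _ _ _ => rfl
  neg_mem' := by intro a ha x y h; simp [Pi.neg_apply, ha x y h]

/-- Normalized 3-cocycles of `G = ℤ/n`. -/
def Z3G : AddSubgroup (C3G n) := nrm3G n ⊓ (dG3 n).ker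

/-- Normalized 3-coboundaries of `G = ℤ/n`. -/
def B3G : AddSubgroup (C3G n) := AddSubgroup.map (dG2 n) (nrm2G n)

/-- `H³(G,𝕋) = H³(ℤ/n, 𝕋)`. -/
abbrev H3G := Z3G n ⧸ (B3G n).addSubgroupOf (Z3G n)

/-- The multiplicative-structure condition `[δ_K β] = 1`: there is a normalized
0-cochain `θ ∈ C⁰_G(K³,𝕋)` with `δ_G θ = δ_K β` (the conjugation action being trivial,
`(δ_G θ)[g‖x,y,z] = θ(x,y,z) - θ(x,y,z)`). -/
def Wms : AddSubgroup (C21 n × C12 n) where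
  carrier := {t | t ∈ Z3t n ∧ ∃ θ : A n → A n → A n → 𝕋,
    ∀ g x y z, t.2 g y z - t.2 g (x + y) z + t.2 g x (y + z) - t.2 g x y =
      θ x y z - θ x y z}
  add_mem' := by
    intro a b ha hb
    refine ⟨(Z3t n).add_mem ha.1 hb.1, 0, fun g x y z => ?_⟩
    obtain ⟨θa, hθa⟩ := ha.2
    obtain ⟨θb, hθb⟩ := hb.2
    have h1 := hθa g x y z
    have h2 := hθb g x y z
    simp only [sub_self] at h1 h2 ⊢
    have : (a + b).2 g y z - (a + b).2 g (x + y) z + (a + b).2 g x (y + z) -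
        (a + b).2 g x y =
        (a.2 g y z - a.2 g (x + y) z + a.2 g x (y + z) - a.2 g x y) +
        (b.2 g y z - b.2 g (x + y) z + b.2 g x (y + z) - b.2 g x y) := by
      simp only [Prod.snd_add, Pi.add_apply]; abel
    rw [this, h1, h2, add_zero]
  zero_mem' := ⟨(Z3t n).zero_mem, 0, by intro g x y z; simp⟩
  neg_mem' := by
    intro a ha
    refine ⟨(Z3t n).neg_mem ha.1, 0, fun g x y z => ?_⟩
    obtain ⟨θa, hθa⟩ := ha.2
    have h1 := hθa g x y z
    simp only [sub_self] at h1 ⊢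
    have : (-a).2 g y z - (-a).2 g (x + y) z + (-a).2 g x (y + z) - (-a).2 g x y =
        -(a.2 g y z - a.2 g (x + y) z + a.2 g x (y + z) - a.2 g x y) := by
      simp only [Prod.snd_neg, Pi.neg_apply]; abel
    rw [this, h1, neg_zero]

/-- The group `MS_G(G)` of multiplicative structures, as a subgroup of
`H³(Tot^*(A^{*,*}/A^{*,*>2}))`. -/
def MS : AddSubgroup (H3t n) :=
  AddSubgroup.map (QuotientAddGroup.mk' ((B3t n).addSubgroupOf (Z3t n)))
    ((Wms n).addSubgroupOf (Z3t n))

/-- The Dijkgraaf–Pasquier–Roche cochain `α_w` for `G = ℤ/n` (conjugation trivial):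
`α_w[g|h‖x] = w[g|h|x] + w[x|g|h] - w[g|x|h]`. -/
def alphaW (w : C3G n) : C21 n := fun g h x => w g h x + w x g h - w g x h

/-- The Dijkgraaf–Pasquier–Roche cochain `β_w` for `G = ℤ/n` (conjugation trivial):
`β_w[g‖x|y] = w[g|x|y] + w[x|y|g] - w[x|g|y]`. -/
def betaW (w : C3G n) : C12 n := fun g x y => w g x y + w x y g - w x g y

section Helpers
variable {M : Type*} [AddCommGroup M]

lemma sum_range_cast (f : ZMod n → M) :
    ∑ j ∈ Finset.range n, f (j : ZMod n) = ∑ z : ZMod n, f z := by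
  apply Finset.sum_nbij' (fun j => ((j : ℕ) : ZMod n)) (fun z => z.val) <;> intros <;>
    simp_all [ZMod.val_lt, ZMod.val_cast_of_lt, ZMod.natCast_zmod_val, Finset.mem_range, Nat.mod_eq_of_lt]

lemma sum_shift (f : ZMod n → M) (a : ZMod n) :
    ∑ j ∈ Finset.range n, f (a + (j : ZMod n)) = ∑ j ∈ Finset.range n, f (j : ZMod n) := by
  rw [sum_range_cast n (fun z => f (a + z)), sum_range_cast n f]
  exact Fintype.sum_equiv (Equiv.addLeft a) _ _ (fun z => rfl)

lemma sum_range_add_n (f : ZMod n → M) (t : ℕ) :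
    ∑ j ∈ Finset.range (t + n), f (j : ZMod n)
      = (∑ j ∈ Finset.range t, f (j : ZMod n)) + ∑ j ∈ Finset.range n, f (j : ZMod n) := by
  rw [Finset.range_eq_Ico, ← Finset.sum_Ico_consecutive _ (Nat.zero_le t) (Nat.le_add_right t n),
    ← Finset.range_eq_Ico, Finset.sum_Ico_eq_sum_range]
  congr 1
  rw [show t + n - t = n by omega]
  calc ∑ j ∈ Finset.range n, f ((t + j : ℕ) : ZMod n)
      = ∑ j ∈ Finset.range n, f ((t : ZMod n) + (j : ZMod n)) := by
        refine Finset.sum_congr rfl fun j _ => ?_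
        rw [Nat.cast_add]
    _ = _ := sum_shift n f (t : ZMod n)

def eps (a b : ZMod n) : ℕ := if n ≤ a.val + b.val then 1 else 0

lemma val_add_eps (a b : ZMod n) : a.val + b.val = (a + b).val + n * eps n a b := by
  have h := ZMod.val_add a b
  have h1 : a.val < n := ZMod.val_lt a
  have h2 : b.val < n := ZMod.val_lt b
  unfold eps
  split
  · rename_i hge
    rw [h, Nat.mod_eq_sub_mod hge, Nat.mod_eq_of_lt (by omega)]
    omega
  · rename_i hlt
    rw [h, Nat.mod_eq_of_lt (by omega)]
    omega

lemma eps_cocycle (a b c : ZMod n) :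
    eps n b c + eps n a (b + c) = eps n a b + eps n (a + b) c := by
  have hn : 0 < n := Nat.pos_of_ne_zero (NeZero.ne n)
  refine Nat.eq_of_mul_eq_mul_left hn ?_
  have e1 := val_add_eps n b c
  have e2 := val_add_eps n a (b + c)
  have e3 := val_add_eps n a b
  have e4 := val_add_eps n (a + b) c
  rw [← add_assoc] at e2
  rw [Nat.mul_add, Nat.mul_add]
  generalize n * eps n b c = A1 at e1 ⊢
  generalize n * eps n a (b+c) = A2 at e2 ⊢
  generalize n * eps n a b = A3 at e3 ⊢
  generalize n * eps n (a+b) c = A4 at e4 ⊢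
  omega

lemma eps_zero_left (b : ZMod n) : eps n 0 b = 0 := by
  unfold eps; rw [ZMod.val_zero]
  simp [Nat.not_le.2 (ZMod.val_lt b)]

lemma eps_zero_right (a : ZMod n) : eps n a 0 = 0 := by
  unfold eps; rw [ZMod.val_zero]
  simp [Nat.not_le.2 (ZMod.val_lt a)]

lemma addfun_natCast (f : ZMod n → M) (hf : ∀ a b, f (a + b) = f a + f b) :
    ∀ k : ℕ, f (k : ZMod n) = k • f 1 := by
  have h0 : f 0 = 0 := by
    have h := hf 0 0
    simp only [add_zero] at h
    exact (add_eq_left.mp h.symm)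
  intro k
  induction k with
  | zero => simpa using h0
  | succ k ih =>
      have hc : ((k + 1 : ℕ) : ZMod n) = (k : ZMod n) + 1 := by push_cast; ring
      rw [hc, hf, ih, succ_nsmul]

lemma addfun_val_smul (f : ZMod n → M) (hf : ∀ a b, f (a + b) = f a + f b) (a : ZMod n) :
    f a = a.val • f 1 := by
  conv_lhs => rw [← ZMod.natCast_zmod_val a]
  exact addfun_natCast n f hf a.val

lemma deg2 (c : ZMod n → ZMod n → M)
    (hn1 : ∀ x, c x 0 = 0)
    (hcoc : ∀ x y z, c y z - c (x + y) z + c x (y + z) - c x y = 0) (x y : ZMod n) :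
    c x y = (∑ j ∈ Finset.range (x + y).val, c (j : ZMod n) 1)
      - (∑ j ∈ Finset.range x.val, c (j : ZMod n) 1)
      - (∑ j ∈ Finset.range y.val, c (j : ZMod n) 1)
      + eps n x y • (∑ j ∈ Finset.range n, c (j : ZMod n) 1) := by
  set P : ℕ → M := fun t => ∑ j ∈ Finset.range t, c (j : ZMod n) 1 with hP
  have claim : ∀ (k : ℕ) (x : ZMod n), c x (k : ZMod n) = P (x.val + k) - P x.val - P k := by
    intro k
    induction k with
    | zero => intro x; simp [hn1, hP]
    | succ k ih =>
        intro x
        have h := hcoc x (k : ZMod n) 1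
        have hx : x + (k : ZMod n) = ((x.val + k : ℕ) : ZMod n) := by
          push_cast [ZMod.natCast_zmod_val]
          rfl
        have e1 : P (x.val + (k + 1)) = P (x.val + k) + c ((x.val + k : ℕ) : ZMod n) 1 := by
          rw [show x.val + (k+1) = (x.val + k) + 1 by omega]
          exact Finset.sum_range_succ _ _
        have e2 : P (k + 1) = P k + c (k : ZMod n) 1 := Finset.sum_range_succ _ _
        have hcast : ((k + 1 : ℕ) : ZMod n) = (k : ZMod n) + 1 := by push_cast; ring
        rw [hcast, e1, e2, ← hx]
        have hik := ih x
        linear_combination (norm := abel) h + hik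
  have hy := claim y.val x
  rw [ZMod.natCast_zmod_val] at hy
  rcases Nat.lt_or_ge (x.val + y.val) n with hc | hc
  · have he : eps n x y = 0 := by unfold eps; exact if_neg (by omega)
    rw [val_add_eps n x y, he] at hy
    rw [he]
    simpa using hy
  · have he : eps n x y = 1 := by unfold eps; exact if_pos hc
    rw [val_add_eps n x y, he] at hy
    rw [he, one_smul, hy]
    have hsp : P ((x+y).val + n * 1) = P ((x+y).val) + P n := by
      rw [Nat.mul_one]
      exact sum_range_add_n n (fun z => c z 1) ((x+y).val)
    rw [hsp]
    abel



lemma deg3 (w : C3G n)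
    (hz1 : ∀ b c, w 0 b c = 0) (hz3 : ∀ a b, w a b 0 = 0)
    (hcoc : ∀ a b c d, w b c d - w (a+b) c d + w a (b+c) d - w a b (c+d) + w a b c = 0) :
    (∀ a b c, w a b c
        = (∑ j ∈ Finset.range c.val, w b (j : ZMod n) 1)
        - (∑ j ∈ Finset.range c.val, w (a + b) (j : ZMod n) 1)
        + ((∑ j ∈ Finset.range (b + c).val, w a (j : ZMod n) 1)
        - (∑ j ∈ Finset.range b.val, w a (j : ZMod n) 1))
        + (a.val * eps n b c) • (∑ j ∈ Finset.range n, w 1 (j : ZMod n) 1))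
      ∧ n • (∑ j ∈ Finset.range n, w 1 (j : ZMod n) 1) = 0 := by
  set F : ZMod n → ℕ → 𝕋 := fun a t => ∑ j ∈ Finset.range t, w a (j : ZMod n) 1 with hF
  have claim : ∀ (k : ℕ) (a b : ZMod n),
      w a b (k : ZMod n) = F b k - F (a+b) k + (F a (b.val + k) - F a b.val) := by
    intro k
    induction k with
    | zero => intro a b; simp [hz3, hF]
    | succ k ih =>
        intro a b
        have h := hcoc a b (k : ZMod n) 1
        have hbk : b + (k : ZMod n) = ((b.val + k : ℕ) : ZMod n) := by
          push_cast [ZMod.natCast_zmod_val]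
          rfl
        have e1 : F b (k + 1) = F b k + w b (k : ZMod n) 1 := Finset.sum_range_succ _ _
        have e2 : F (a+b) (k + 1) = F (a+b) k + w (a+b) (k : ZMod n) 1 := Finset.sum_range_succ _ _
        have e3 : F a (b.val + (k + 1)) = F a (b.val + k) + w a ((b.val + k : ℕ) : ZMod n) 1 := by
          rw [show b.val + (k+1) = (b.val + k) + 1 by omega]
          exact Finset.sum_range_succ _ _
        have hcast : ((k + 1 : ℕ) : ZMod n) = (k : ZMod n) + 1 := by push_cast; ring
        rw [hcast, e1, e2, e3, ← hbk]
        have hik := ih a b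
        linear_combination (norm := abel) hik - h
  have Madd : ∀ a b : ZMod n, F (a + b) n = F a n + F b n := by
    intro a b
    have hk := claim n a b
    rw [ZMod.natCast_self, hz3] at hk
    have hsplit : F a (b.val + n) = F a b.val + F a n := sum_range_add_n n (fun z => w a z 1) b.val
    rw [hsplit] at hk
    linear_combination (norm := abel) hk
  have Mtor : n • F 1 n = 0 := by
    have h1 := addfun_natCast n (fun a => F a n) Madd n
    rw [ZMod.natCast_self] at h1
    have h2 : F 0 n = 0 := Finset.sum_eq_zero fun j _ => hz1 _ _
    rw [h2] at h1
    exact h1.symm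
  have Mval : ∀ a : ZMod n, F a n = a.val • F 1 n := fun a =>
    addfun_val_smul n (fun a => F a n) Madd a
  constructor
  · intro a b c
    have hk := claim c.val a b
    rw [ZMod.natCast_zmod_val] at hk
    rcases Nat.lt_or_ge (b.val + c.val) n with hc | hc
    · have he : eps n b c = 0 := by unfold eps; exact if_neg (by omega)
      rw [val_add_eps n b c, he] at hk
      rw [he, Nat.mul_zero, zero_smul, add_zero]
      simpa using hk
    · have he : eps n b c = 1 := by unfold eps; exact if_pos hc
      rw [val_add_eps n b c, he] at hk
      rw [he, Nat.mul_one]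
      have hsp : F a ((b+c).val + n * 1) = F a ((b+c).val) + F a n := by
        rw [Nat.mul_one]
        exact sum_range_add_n n (fun z => w a z 1) ((b+c).val)
      rw [hsp, Mval a] at hk
      rw [hk]
      abel
  · exact Mtor

lemma sum_eps_smul (t : 𝕋) (ht : n • t = 0) :
    ∑ j ∈ Finset.range n, (((1 : ZMod n)).val * eps n (j : ZMod n) 1) • t = t := by
  rcases eq_or_lt_of_le (Nat.one_le_iff_ne_zero.mpr (NeZero.ne n)) with h1 | h1
  · have ht' : t = 0 := by rw [← h1, one_nsmul] at ht; exact ht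
    rw [ht']
    simp
  · have hv1 : (1 : ZMod n).val = 1 := by
      haveI : Fact (1 < n) := ⟨h1⟩; exact ZMod.val_one n
    have key : ∀ j ∈ Finset.range n, (((1:ZMod n)).val * eps n (j : ZMod n) 1) • t
        = if j = n - 1 then t else 0 := by
      intro j hj
      rw [Finset.mem_range] at hj
      rw [hv1, one_mul]
      have hjv : ((j : ZMod n)).val = j := ZMod.val_cast_of_lt hj
      by_cases hj1 : j = n - 1
      · have he : eps n (j : ZMod n) 1 = 1 := by
          unfold eps; rw [hjv, hv1]; exact if_pos (by omega)
        rw [he, one_smul, if_pos hj1]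
      · have he : eps n (j : ZMod n) 1 = 0 := by
          unfold eps; rw [hjv, hv1]; exact if_neg (by omega)
        rw [he, zero_smul, if_neg hj1]
    rw [Finset.sum_congr rfl key, Finset.sum_ite_eq' (Finset.range n) (n-1) (fun _ => t)]
    rw [if_pos (Finset.mem_range.mpr (by omega))]

def omegaC (m : 𝕋) : C3G n := fun a b c => (a.val * eps n b c) • m

/-- The torsion subgroup. -/
def torSub : AddSubgroup 𝕋 where
  carrier := {x | n • x = 0}
  add_mem' := by
    intro a b ha hb
    simp only [Set.mem_setOf_eq, smul_add] at *
    rw [ha, hb, add_zero]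
  zero_mem' := by simp
  neg_mem' := by
    intro a ha
    simp only [Set.mem_setOf_eq, smul_neg] at *
    rw [ha, neg_zero]

lemma mem_torSub {x : 𝕋} : x ∈ torSub n ↔ n • x = 0 := Iff.rfl

def tHomZ : ℤ →+ 𝕋 := AddMonoidHom.mk' (fun z => (((z : ℝ) * (n:ℝ)⁻¹ : ℝ) : 𝕋))
  (by
    intro a b
    rw [← AddCircle.coe_add]
    exact congrArg (fun r : ℝ => (r : 𝕋)) (by push_cast; ring))

lemma tHomZ_n : tHomZ n ((n : ℕ) : ℤ) = 0 := by
  have hnne : (n:ℝ) ≠ 0 := Nat.cast_ne_zero.mpr (NeZero.ne n)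
  show ((((n:ℤ) : ℝ) * (n:ℝ)⁻¹ : ℝ) : 𝕋) = 0
  rw [show (((n:ℤ) : ℝ) * (n:ℝ)⁻¹ : ℝ) = 1 by push_cast; field_simp]
  exact AddCircle.coe_period 1

def tHom : ZMod n →+ 𝕋 := ZMod.lift n ⟨tHomZ n, tHomZ_n n⟩

lemma tHom_apply (k : ZMod n) : tHom n k = ((((k.val : ℕ) : ℝ) * (n:ℝ)⁻¹ : ℝ) : 𝕋) := by
  have hk : k = (((k.val : ℕ) : ℤ) : ZMod n) := by push_cast [ZMod.natCast_zmod_val]; rfl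
  conv_lhs => rw [hk]
  rw [tHom, ZMod.lift_coe]
  exact congrArg (fun r : ℝ => (r : 𝕋)) (by push_cast; ring)

lemma tHom_tor (k : ZMod n) : n • tHom n k = 0 := by
  rw [← map_nsmul]
  have h : n • k = 0 := by
    rw [nsmul_eq_mul, ZMod.natCast_self, zero_mul]
  rw [h, map_zero]

def eThom : ZMod n →+ torSub n := (tHom n).codRestrict (torSub n) (fun k => tHom_tor n k)

lemma eThom_bij : Function.Bijective (eThom n) := by
  haveI : Fact ((0:ℝ) < 1) := ⟨zero_lt_one⟩
  have hnpos : (0:ℝ) < n := by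
    have := Nat.pos_of_ne_zero (NeZero.ne n); exact_mod_cast this
  have hnne : (n:ℝ) ≠ 0 := ne_of_gt hnpos
  constructor
  · rw [injective_iff_map_eq_zero]
    intro k hk
    have hk' : tHom n k = 0 := congrArg Subtype.val hk
    rw [tHom_apply] at hk'
    rw [AddCircle.coe_eq_zero_iff] at hk'
    obtain ⟨z, hz⟩ := hk'
    rw [zsmul_eq_mul, mul_one] at hz
    have hub : ((k.val : ℕ) : ℝ) * (n:ℝ)⁻¹ < 1 := by
      rw [← div_eq_mul_inv, div_lt_one hnpos]
      exact_mod_cast ZMod.val_lt k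
    have hlb : (0:ℝ) ≤ ((k.val : ℕ) : ℝ) * (n:ℝ)⁻¹ := by positivity
    have hz0 : z = 0 := by
      have h1 : (0:ℝ) ≤ (z:ℝ) := by rw [hz]; exact hlb
      have h2 : (z:ℝ) < 1 := by rw [hz]; exact hub
      have h1' : (0:ℤ) ≤ z := by exact_mod_cast h1
      have h2' : z < 1 := by exact_mod_cast h2
      omega
    rw [hz0] at hz
    have hkv : ((k.val : ℕ) : ℝ) = 0 := by
      have h' : ((k.val : ℕ) : ℝ) * (n:ℝ)⁻¹ = 0 := by exact_mod_cast hz.symm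
      rcases mul_eq_zero.mp h' with h | h
      · exact h
      · exact absurd h (inv_ne_zero hnne)
    have hkv' : k.val = 0 := by exact_mod_cast hkv
    exact (ZMod.val_eq_zero k).mp hkv'
  · rintro ⟨x, hx⟩
    rw [mem_torSub] at hx
    obtain ⟨r, rfl⟩ := QuotientAddGroup.mk_surjective x
    rw [← AddCircle.coe_nsmul, AddCircle.coe_eq_zero_iff] at hx
    obtain ⟨z, hz⟩ := hx
    rw [zsmul_eq_mul, mul_one] at hz
    refine ⟨((z : ℤ) : ZMod n), ?_⟩
    apply Subtype.ext
    show tHom n ((z : ℤ) : ZMod n) = (r : 𝕋)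
    rw [tHom, ZMod.lift_coe]
    show (((z : ℝ) * (n:ℝ)⁻¹ : ℝ) : 𝕋) = (r : 𝕋)
    have hr : (z : ℝ) * (n:ℝ)⁻¹ = r := by
      rw [hz, nsmul_eq_mul]
      push_cast
      field_simp
    rw [hr]

def eT : ZMod n ≃+ torSub n := AddEquiv.ofBijective (eThom n) (eThom_bij n)

end Helpers

section Main

/- ### Membership characterizations -/

lemma mem_nrm3G_iff (w : C3G n) :
    w ∈ nrm3G n ↔ ∀ a b c, (a = 0 ∨ b = 0 ∨ c = 0) → w a b c = 0 := Iff.rfl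

lemma mem_nrm2G_iff (u : C2G n) :
    u ∈ nrm2G n ↔ ∀ a b, (a = 0 ∨ b = 0) → u a b = 0 := Iff.rfl

lemma mem_nrm3_iff (t : C21 n × C12 n) : t ∈ nrm3 n ↔
    ((∀ g₁ g₂ k, (g₁ = 0 ∨ g₂ = 0 ∨ k = 0) → t.1 g₁ g₂ k = 0) ∧
     (∀ g x y, (g = 0 ∨ x = 0 ∨ y = 0) → t.2 g x y = 0)) := Iff.rfl

lemma mem_nrm2_iff (t : C11 n × C02 n) : t ∈ nrm2 n ↔
    ((∀ g k, (g = 0 ∨ k = 0) → t.1 g k = 0) ∧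
     (∀ x y, (x = 0 ∨ y = 0) → t.2 x y = 0)) := Iff.rfl

lemma Z3G_iff (w : C3G n) : w ∈ Z3G n ↔
    ((∀ a b c, (a = 0 ∨ b = 0 ∨ c = 0) → w a b c = 0) ∧
     ∀ a b c d, w b c d - w (a+b) c d + w a (b+c) d - w a b (c+d) + w a b c = 0) := by
  rw [Z3G, AddSubgroup.mem_inf, AddMonoidHom.mem_ker]
  refine and_congr (mem_nrm3G_iff n w) ?_
  constructor
  · intro h a b c d
    exact congrFun (congrFun (congrFun (congrFun h a) b) c) d
  · intro h
    funext a b c d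
    exact h a b c d

lemma Z3t_iff (z : C21 n × C12 n) : z ∈ Z3t n ↔
    ((∀ g₁ g₂ k, (g₁ = 0 ∨ g₂ = 0 ∨ k = 0) → z.1 g₁ g₂ k = 0) ∧
     (∀ g x y, (g = 0 ∨ x = 0 ∨ y = 0) → z.2 g x y = 0) ∧
     (∀ g₁ g₂ g₃ k, z.1 g₂ g₃ k - z.1 (g₁+g₂) g₃ k + z.1 g₁ (g₂+g₃) k - z.1 g₁ g₂ k = 0) ∧
     (∀ g₁ g₂ x y, (z.1 g₁ g₂ y - z.1 g₁ g₂ (x+y) + z.1 g₁ g₂ x)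
        + (z.2 g₂ x y - z.2 (g₁+g₂) x y + z.2 g₁ x y) = 0)) := by
  rw [Z3t, AddSubgroup.mem_inf, AddMonoidHom.mem_ker]
  constructor
  · rintro ⟨⟨h1, h2⟩, hk⟩
    have hk1 : dG21 n z.1 = 0 := congrArg Prod.fst hk
    have hk2 : dK21 n z.1 + dG12 n z.2 = 0 := congrArg Prod.snd hk
    refine ⟨h1, h2, ?_, ?_⟩
    · intro g₁ g₂ g₃ k
      exact congrFun (congrFun (congrFun (congrFun hk1 g₁) g₂) g₃) k
    · intro g₁ g₂ x y
      exact congrFun (congrFun (congrFun (congrFun hk2 g₁) g₂) x) y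
  · rintro ⟨h1, h2, h3, h4⟩
    refine ⟨⟨h1, h2⟩, ?_⟩
    have hk1 : dG21 n z.1 = 0 := by funext g₁ g₂ g₃ k; exact h3 g₁ g₂ g₃ k
    have hk2 : dK21 n z.1 + dG12 n z.2 = 0 := by funext g₁ g₂ x y; exact h4 g₁ g₂ x y
    exact Prod.ext hk1 hk2

lemma Wms_iff (z : C21 n × C12 n) : z ∈ Wms n ↔
    (z ∈ Z3t n ∧ ∀ g x y y', z.2 g y y' - z.2 g (x+y) y' + z.2 g x (y+y') - z.2 g x y = 0) := by
  constructor
  · rintro ⟨h1, θ, hθ⟩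
    exact ⟨h1, fun g x y y' => by simpa using hθ g x y y'⟩
  · rintro ⟨h1, h2⟩
    exact ⟨h1, 0, fun g x y y' => by simpa using h2 g x y y'⟩

lemma mk_mem_MS (z : Z3t n) (hzW : (z : C21 n × C12 n) ∈ Wms n) :
    (QuotientAddGroup.mk z : H3t n) ∈ MS n :=
  ⟨z, AddSubgroup.mem_addSubgroupOf.mpr hzW, rfl⟩

/- ### The invariant on `H³(G,𝕋)` -/

def EEhom : C3G n →+ 𝕋 := AddMonoidHom.mk'
  (fun w => ∑ j ∈ Finset.range n, w 1 (j : ZMod n) 1)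
  (by intro a b; rw [← Finset.sum_add_distrib]; rfl)

lemma EE_tor (w : C3G n) (hw : w ∈ Z3G n) : n • EEhom n w = 0 := by
  obtain ⟨hn', hcoc⟩ := (Z3G_iff n w).mp hw
  exact (deg3 n w (fun b c => hn' 0 b c (Or.inl rfl))
    (fun a b => hn' a b 0 (Or.inr (Or.inr rfl))) hcoc).2

lemma EE_dG2 (u : C2G n) : EEhom n (dG2 n u) = 0 := by
  show ∑ j ∈ Finset.range n,
      (u (j:ZMod n) 1 - u (1 + (j:ZMod n)) 1 + u 1 ((j:ZMod n) + 1) - u 1 (j:ZMod n)) = 0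
  have t1 : ∑ j ∈ Finset.range n, u (1 + (j:ZMod n)) 1 = ∑ j ∈ Finset.range n, u (j:ZMod n) 1 :=
    sum_shift n (fun z => u z 1) 1
  have t2 : ∑ j ∈ Finset.range n, u 1 ((j:ZMod n) + 1) = ∑ j ∈ Finset.range n, u 1 (j:ZMod n) := by
    calc ∑ j ∈ Finset.range n, u 1 ((j:ZMod n) + 1)
        = ∑ j ∈ Finset.range n, u 1 (1 + (j:ZMod n)) :=
          Finset.sum_congr rfl fun j _ => by rw [add_comm]
      _ = _ := sum_shift n (fun z => u 1 z) 1
  rw [Finset.sum_sub_distrib, Finset.sum_add_distrib, Finset.sum_sub_distrib, t1, t2]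
  abel

lemma omegaC_mem (m : 𝕋) (hm : n • m = 0) : omegaC n m ∈ Z3G n := by
  rw [Z3G_iff]
  constructor
  · intro a b c h
    rcases h with rfl | rfl | rfl
    · simp [omegaC]
    · simp [omegaC, eps_zero_left]
    · simp [omegaC, eps_zero_right]
  · intro a b c d
    show (b.val * eps n c d) • m - ((a+b).val * eps n c d) • m + (a.val * eps n (b+c) d) • m
        - (a.val * eps n b (c+d)) • m + (a.val * eps n b c) • m = 0
    have h1 := eps_cocycle n b c d
    have h2 := val_add_eps n a b
    have hPN : (b.val * eps n c d + a.val * eps n (b+c) d + a.val * eps n b c : ℤ)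
        = ((a+b).val * eps n c d + a.val * eps n b (c+d) + eps n a b * eps n c d * n : ℤ) := by
      zify at h1 h2
      linear_combination (-(a.val : ℤ)) * h1 + (eps n c d : ℤ) * h2
    have hPN' : b.val * eps n c d + a.val * eps n (b+c) d + a.val * eps n b c
        = (a+b).val * eps n c d + a.val * eps n b (c+d) + eps n a b * eps n c d * n := by
      exact_mod_cast hPN
    have key : (b.val * eps n c d + a.val * eps n (b+c) d + a.val * eps n b c) • m
        = ((a+b).val * eps n c d + a.val * eps n b (c+d)) • m := by
      rw [hPN', add_nsmul, mul_smul, hm, smul_zero, add_zero]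
    rw [add_nsmul, add_nsmul, add_nsmul] at key
    linear_combination (norm := abel) key

lemma EE_omegaC (m : 𝕋) (hm : n • m = 0) : EEhom n (omegaC n m) = m :=
  sum_eps_smul n m hm

lemma EE_zero_mem (w : C3G n) (hw : w ∈ Z3G n) (h0 : EEhom n w = 0) : w ∈ B3G n := by
  obtain ⟨hn', hcoc⟩ := (Z3G_iff n w).mp hw
  have hmain := (deg3 n w (fun b c => hn' 0 b c (Or.inl rfl))
    (fun a b => hn' a b 0 (Or.inr (Or.inr rfl))) hcoc).1
  have h0' : (∑ j ∈ Finset.range n, w 1 (j : ZMod n) 1) = 0 := h0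
  refine ⟨fun a b => ∑ j ∈ Finset.range b.val, w a (j:ZMod n) 1, ?_, ?_⟩
  · intro a b h
    rcases h with rfl | rfl
    · exact Finset.sum_eq_zero fun j _ => hn' 0 _ 1 (Or.inl rfl)
    · simp [ZMod.val_zero]
  · funext a b c
    show (∑ j ∈ Finset.range c.val, w b (j:ZMod n) 1)
        - (∑ j ∈ Finset.range c.val, w (a+b) (j:ZMod n) 1)
        + (∑ j ∈ Finset.range (b+c).val, w a (j:ZMod n) 1)
        - (∑ j ∈ Finset.range b.val, w a (j:ZMod n) 1) = w a b c
    have := hmain a b c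
    rw [h0', smul_zero, add_zero] at this
    rw [this]
    abel

def EZh : Z3G n →+ torSub n :=
  ((EEhom n).comp (Z3G n).subtype).codRestrict (torSub n) (fun w => EE_tor n w.1 w.2)

def Ebar : H3G n →+ torSub n :=
  QuotientAddGroup.lift _ (EZh n) (by
    intro z hzB
    rw [AddMonoidHom.mem_ker]
    apply Subtype.ext
    show EEhom n (z : C3G n) = 0
    obtain ⟨u, hu, hzu⟩ := AddSubgroup.mem_addSubgroupOf.mp hzB
    rw [← hzu]
    exact EE_dG2 n u)

lemma Ebar_mk (w : Z3G n) : Ebar n (QuotientAddGroup.mk w) = EZh n w := rfl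

lemma Ebar_bij : Function.Bijective (Ebar n) := by
  constructor
  · rw [injective_iff_map_eq_zero]
    intro q hq
    obtain ⟨z, rfl⟩ := QuotientAddGroup.mk_surjective q
    rw [Ebar_mk] at hq
    have h0 : EEhom n (z : C3G n) = 0 := congrArg Subtype.val hq
    rw [QuotientAddGroup.eq_zero_iff]
    exact AddSubgroup.mem_addSubgroupOf.mpr (EE_zero_mem n z.1 z.2 h0)
  · intro t
    refine ⟨QuotientAddGroup.mk ⟨omegaC n (t : 𝕋), omegaC_mem n (t : 𝕋) t.2⟩, ?_⟩
    rw [Ebar_mk]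
    apply Subtype.ext
    show EEhom n (omegaC n (t : 𝕋)) = (t : 𝕋)
    exact EE_omegaC n (t : 𝕋) t.2

def i1E : H3G n ≃+ ZMod n :=
  (AddEquiv.ofBijective (Ebar n) (Ebar_bij n)).trans (eT n).symm

lemma i1E_mk (w : Z3G n) :
    i1E n (QuotientAddGroup.mk w) = (eT n).symm ⟨EEhom n w.1, EE_tor n w.1 w.2⟩ :=
  congrArg (eT n).symm (Subtype.ext rfl)

/- ### The invariant on the truncated total complex -/

def eHom : (C21 n × C12 n) →+ 𝕋 := AddMonoidHom.mk'
  (fun z => ∑ j ∈ Finset.range n, (z.2 1 (j : ZMod n) 1 + z.1 (j : ZMod n) 1 1))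
  (by
    intro a b
    rw [← Finset.sum_add_distrib]
    refine Finset.sum_congr rfl fun j _ => ?_
    simp only [Prod.fst_add, Prod.snd_add, Pi.add_apply]
    abel)

lemma Z3t_red (z : C21 n × C12 n) (hz : z ∈ Z3t n) :
    ∃ χ : C11 n,
      (∀ g k, (g = 0 ∨ k = 0) → χ g k = 0) ∧
      (∀ g₁ g₂ k, χ g₂ k - χ (g₁ + g₂) k + χ g₁ k = z.1 g₁ g₂ k) ∧
      (∀ g x y, z.2 g x y + (χ g y - χ g (x + y) + χ g x)
          = g.val • (z.2 1 x y + (χ 1 y - χ 1 (x + y) + χ 1 x))) ∧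
      (∀ x y, n • (z.2 1 x y + (χ 1 y - χ 1 (x + y) + χ 1 x)) = 0) ∧
      (∀ x y, (x = 0 ∨ y = 0) → z.2 1 x y + (χ 1 y - χ 1 (x + y) + χ 1 x) = 0) ∧
      (∑ j ∈ Finset.range n, (z.2 1 (j : ZMod n) 1
          + (χ 1 1 - χ 1 ((j : ZMod n) + 1) + χ 1 (j : ZMod n)))) = eHom n z := by
  obtain ⟨hnα, hnβ, hc1, hc2⟩ := (Z3t_iff n z).mp hz
  have hnR : (n:ℝ) ≠ 0 := Nat.cast_ne_zero.mpr (NeZero.ne n)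
  have hS0 : (∑ j ∈ Finset.range n, z.1 (j : ZMod n) 1 0) = 0 :=
    Finset.sum_eq_zero fun j _ => hnα _ _ _ (Or.inr (Or.inr rfl))
  choose s hs using fun k : ZMod n =>
    QuotientAddGroup.mk_surjective (∑ j ∈ Finset.range n, z.1 (j : ZMod n) 1 k)
  set s' : ZMod n → ℝ := fun k => if k = 0 then 0 else s k with hs'def
  have hs'' : ∀ k, ((s' k : ℝ) : 𝕋) = ∑ j ∈ Finset.range n, z.1 (j : ZMod n) 1 k := by
    intro k
    by_cases hk : k = 0
    · subst hk
      simp only [hs'def, if_pos rfl, hS0]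
      exact QuotientAddGroup.mk_zero _
    · simp only [hs'def, if_neg hk]
      exact hs k
  set χ : C11 n := fun g k => -(∑ j ∈ Finset.range g.val, z.1 (j : ZMod n) 1 k)
      + ((((g.val : ℕ) : ℝ) * s' k * (n:ℝ)⁻¹ : ℝ) : 𝕋) with hχdef
  have hχ0 : ∀ g k, (g = 0 ∨ k = 0) → χ g k = 0 := by
    intro g k hgk
    rcases hgk with rfl | rfl
    · show -(∑ j ∈ Finset.range (0:ZMod n).val, z.1 (j : ZMod n) 1 k)
          + (((((0:ZMod n).val : ℕ) : ℝ) * s' k * (n:ℝ)⁻¹ : ℝ) : 𝕋) = 0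
      rw [ZMod.val_zero]
      simp only [Finset.range_zero, Finset.sum_empty, neg_zero, zero_add, Nat.cast_zero,
        zero_mul]
      exact QuotientAddGroup.mk_zero _
    · show -(∑ j ∈ Finset.range g.val, z.1 (j : ZMod n) 1 0)
          + ((((g.val : ℕ) : ℝ) * s' 0 * (n:ℝ)⁻¹ : ℝ) : 𝕋) = 0
      have h1 : (∑ j ∈ Finset.range g.val, z.1 (j : ZMod n) 1 0) = 0 :=
        Finset.sum_eq_zero fun j _ => hnα _ _ _ (Or.inr (Or.inr rfl))
      have h2 : s' 0 = 0 := by simp [hs'def]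
      rw [h1, h2, neg_zero, zero_add, mul_zero, zero_mul]
      exact QuotientAddGroup.mk_zero _
  have hχd : ∀ g₁ g₂ k, χ g₂ k - χ (g₁ + g₂) k + χ g₁ k = z.1 g₁ g₂ k := by
    intro g₁ g₂ k
    have hd := deg2 n (fun x y => z.1 x y k)
      (fun x => hnα x 0 k (Or.inr (Or.inl rfl)))
      (fun x y y' => hc1 x y y' k) g₁ g₂
    have hval : ((g₁.val : ℝ) + (g₂.val : ℝ)) = (((g₁+g₂).val : ℝ)) + (n : ℝ) * (eps n g₁ g₂ : ℝ) := by
      exact_mod_cast congrArg (Nat.cast (R := ℝ)) (val_add_eps n g₁ g₂)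
    have hσr : ((g₂.val : ℝ) * s' k * (n:ℝ)⁻¹) - (((g₁+g₂).val : ℝ) * s' k * (n:ℝ)⁻¹)
        + ((g₁.val : ℝ) * s' k * (n:ℝ)⁻¹) = (eps n g₁ g₂ : ℕ) • (s' k) := by
      rw [nsmul_eq_mul]
      have h9 : ((g₂.val : ℝ)) - (((g₁+g₂).val : ℝ)) + ((g₁.val : ℝ))
          = (n:ℝ) * (eps n g₁ g₂ : ℝ) := by linarith [hval]
      calc ((g₂.val : ℝ) * s' k * (n:ℝ)⁻¹) - (((g₁+g₂).val : ℝ) * s' k * (n:ℝ)⁻¹)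
            + ((g₁.val : ℝ) * s' k * (n:ℝ)⁻¹)
          = (((g₂.val : ℝ) - (((g₁+g₂).val : ℝ)) + ((g₁.val : ℝ))) * s' k) * (n:ℝ)⁻¹ := by ring
        _ = ((n:ℝ) * (eps n g₁ g₂ : ℝ) * s' k) * (n:ℝ)⁻¹ := by rw [h9]
        _ = ((eps n g₁ g₂ : ℝ) * s' k) * ((n:ℝ) * (n:ℝ)⁻¹) := by ring
        _ = (eps n g₁ g₂ : ℝ) * s' k := by rw [mul_inv_cancel₀ hnR, mul_one]
    have hσ : ((((g₂.val : ℕ) : ℝ) * s' k * (n:ℝ)⁻¹ : ℝ) : 𝕋)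
        - (((((g₁+g₂).val : ℕ) : ℝ) * s' k * (n:ℝ)⁻¹ : ℝ) : 𝕋)
        + ((((g₁.val : ℕ) : ℝ) * s' k * (n:ℝ)⁻¹ : ℝ) : 𝕋)
        = eps n g₁ g₂ • (∑ j ∈ Finset.range n, z.1 (j : ZMod n) 1 k) := by
      rw [← AddCircle.coe_sub, ← AddCircle.coe_add, hσr, AddCircle.coe_nsmul, hs'' k]
    rw [hd]
    show (-(∑ j ∈ Finset.range g₂.val, z.1 (j : ZMod n) 1 k)
          + ((((g₂.val : ℕ) : ℝ) * s' k * (n:ℝ)⁻¹ : ℝ) : 𝕋))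
        - (-(∑ j ∈ Finset.range (g₁+g₂).val, z.1 (j : ZMod n) 1 k)
          + (((((g₁+g₂).val : ℕ) : ℝ) * s' k * (n:ℝ)⁻¹ : ℝ) : 𝕋))
        + (-(∑ j ∈ Finset.range g₁.val, z.1 (j : ZMod n) 1 k)
          + ((((g₁.val : ℕ) : ℝ) * s' k * (n:ℝ)⁻¹ : ℝ) : 𝕋)) = _
    linear_combination (norm := abel) hσ
  have hβadd : ∀ x y g₁ g₂,
      (z.2 g₂ x y + (χ g₂ y - χ g₂ (x + y) + χ g₂ x))
      - (z.2 (g₁+g₂) x y + (χ (g₁+g₂) y - χ (g₁+g₂) (x + y) + χ (g₁+g₂) x))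
      + (z.2 g₁ x y + (χ g₁ y - χ g₁ (x + y) + χ g₁ x)) = 0 := by
    intro x y g₁ g₂
    have h1 := hχd g₁ g₂ y
    have h2 := hχd g₁ g₂ (x+y)
    have h3 := hχd g₁ g₂ x
    have h4 := hc2 g₁ g₂ x y
    linear_combination (norm := abel) h1 - h2 + h3 + h4
  have hfadd : ∀ x y, ∀ a b : ZMod n,
      z.2 (a + b) x y + (χ (a + b) y - χ (a + b) (x + y) + χ (a + b) x)
      = (z.2 a x y + (χ a y - χ a (x + y) + χ a x))
        + (z.2 b x y + (χ b y - χ b (x + y) + χ b x)) := by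
    intro x y a b
    have hb := hβadd x y a b
    linear_combination (norm := abel) - hb
  have hgval : ∀ g x y, z.2 g x y + (χ g y - χ g (x + y) + χ g x)
      = g.val • (z.2 1 x y + (χ 1 y - χ 1 (x + y) + χ 1 x)) := by
    intro g x y
    exact addfun_val_smul n (fun g => z.2 g x y + (χ g y - χ g (x + y) + χ g x))
      (fun a b => hfadd x y a b) g
  have hnorm' : ∀ x y, (x = 0 ∨ y = 0) → z.2 1 x y + (χ 1 y - χ 1 (x + y) + χ 1 x) = 0 := by
    intro x y hxy
    rcases hxy with rfl | rfl
    · have e1 := hnβ 1 0 y (Or.inr (Or.inl rfl))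
      have e2 := hχ0 1 0 (Or.inr rfl)
      rw [zero_add]
      linear_combination (norm := abel) e1 + e2
    · have e1 := hnβ 1 x 0 (Or.inr (Or.inr rfl))
      have e2 := hχ0 1 0 (Or.inr rfl)
      rw [add_zero]
      linear_combination (norm := abel) e1 + e2
  have htor : ∀ x y, n • (z.2 1 x y + (χ 1 y - χ 1 (x + y) + χ 1 x)) = 0 := by
    intro x y
    have h := addfun_natCast n (fun g => z.2 g x y + (χ g y - χ g (x + y) + χ g x))
      (fun a b => hfadd x y a b) n
    rw [ZMod.natCast_self] at h
    have h0 : z.2 0 x y + (χ 0 y - χ 0 (x + y) + χ 0 x) = 0 := by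
      rw [hnβ 0 x y (Or.inl rfl), hχ0 0 y (Or.inl rfl), hχ0 0 (x+y) (Or.inl rfl),
        hχ0 0 x (Or.inl rfl)]
      abel
    rw [← h]
    exact h0
  have hχ11 : n • χ 1 1 = ∑ j ∈ Finset.range n, z.1 (j:ZMod n) 1 1 := by
    rcases eq_or_lt_of_le (Nat.one_le_iff_ne_zero.mpr (NeZero.ne n)) with h1 | h1
    · have hone : (1 : ZMod n) = 0 := by
        rw [show (1 : ZMod n) = ((1 : ℕ) : ZMod n) by rw [Nat.cast_one], h1, ZMod.natCast_self]
      have hL : χ 1 1 = 0 := by rw [hone]; exact hχ0 0 0 (Or.inl rfl)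
      rw [hL, smul_zero]
      exact (Finset.sum_eq_zero fun j _ => by
        rw [hone]; exact hnα _ _ _ (Or.inr (Or.inl rfl))).symm
    · have hv1 : (1 : ZMod n).val = 1 := by
        haveI : Fact (1 < n) := ⟨h1⟩; exact ZMod.val_one n
      have hρ : (∑ j ∈ Finset.range (1:ZMod n).val, z.1 (j:ZMod n) 1 1) = 0 := by
        rw [hv1, Finset.sum_range_one]
        exact hnα _ _ _ (Or.inl (by rw [Nat.cast_zero]))
      show n • (-(∑ j ∈ Finset.range (1:ZMod n).val, z.1 (j:ZMod n) 1 1)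
          + ((((1:ZMod n).val : ℕ) : ℝ) * s' 1 * (n:ℝ)⁻¹ : ℝ)) = _
      rw [hρ, neg_zero, zero_add, ← AddCircle.coe_nsmul]
      have : (n • ((((1:ZMod n).val : ℕ) : ℝ) * s' 1 * (n:ℝ)⁻¹) : ℝ) = s' 1 := by
        rw [hv1, nsmul_eq_mul]
        push_cast
        field_simp
      rw [this, hs'' 1]
  have hsum : ∑ j ∈ Finset.range n, (χ 1 1 - χ 1 ((j:ZMod n)+1) + χ 1 (j:ZMod n))
      = n • χ 1 1 := by
    have t1 : ∑ j ∈ Finset.range n, χ 1 ((j:ZMod n)+1) = ∑ j ∈ Finset.range n, χ 1 (j:ZMod n) := by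
      calc ∑ j ∈ Finset.range n, χ 1 ((j:ZMod n)+1)
          = ∑ j ∈ Finset.range n, χ 1 (1+(j:ZMod n)) :=
            Finset.sum_congr rfl fun j _ => by rw [add_comm]
        _ = _ := sum_shift n (fun zz => χ 1 zz) 1
    rw [Finset.sum_add_distrib, Finset.sum_sub_distrib, t1, Finset.sum_const, Finset.card_range]
    abel
  refine ⟨χ, hχ0, hχd, hgval, htor, hnorm', ?_⟩
  rw [Finset.sum_add_distrib, hsum, hχ11]
  show _ = ∑ j ∈ Finset.range n, (z.2 1 (j : ZMod n) 1 + z.1 (j : ZMod n) 1 1)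
  rw [Finset.sum_add_distrib]

lemma e_tor (z : Z3t n) : n • eHom n (z : C21 n × C12 n) = 0 := by
  obtain ⟨χ, _, _, _, htor, _, hlast⟩ := Z3t_red n (z : C21 n × C12 n) z.2
  rw [← hlast, Finset.smul_sum]
  exact Finset.sum_eq_zero fun j _ => htor _ _

def eZh : Z3t n →+ torSub n :=
  ((eHom n).comp (Z3t n).subtype).codRestrict (torSub n) (fun z => e_tor n z)

lemma e_B3t (zz : C21 n × C12 n) (hzz : zz ∈ B3t n) : eHom n zz = 0 := by
  obtain ⟨⟨χ, κ⟩, -, rfl⟩ := hzz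
  have t1 : ∑ j ∈ Finset.range n, χ 1 ((j:ZMod n)+1) = ∑ j ∈ Finset.range n, χ 1 (j:ZMod n) := by
    calc ∑ j ∈ Finset.range n, χ 1 ((j:ZMod n)+1)
        = ∑ j ∈ Finset.range n, χ 1 (1+(j:ZMod n)) :=
          Finset.sum_congr rfl fun j _ => by rw [add_comm]
      _ = _ := sum_shift n (fun zz => χ 1 zz) 1
  have t2 : ∑ j ∈ Finset.range n, χ ((j:ZMod n)+1) 1 = ∑ j ∈ Finset.range n, χ (j:ZMod n) 1 := by
    calc ∑ j ∈ Finset.range n, χ ((j:ZMod n)+1) 1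
        = ∑ j ∈ Finset.range n, χ (1+(j:ZMod n)) 1 :=
          Finset.sum_congr rfl fun j _ => by rw [add_comm]
      _ = _ := sum_shift n (fun zz => χ zz 1) 1
  calc eHom n (d2t n (χ, κ))
      = ∑ j ∈ Finset.range n, ((d2t n (χ, κ)).2 1 (j:ZMod n) 1
          + (d2t n (χ, κ)).1 (j:ZMod n) 1 1) := rfl
    _ = ∑ j ∈ Finset.range n, ((χ 1 ((j:ZMod n)+1) - χ 1 (j:ZMod n))
          + (χ (j:ZMod n) 1 - χ ((j:ZMod n)+1) 1)) := by
        refine Finset.sum_congr rfl fun j _ => ?_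
        show ((κ ((j:ZMod n)) 1 - κ ((j:ZMod n)) 1)
            - (χ 1 1 - χ 1 ((j:ZMod n)+1) + χ 1 (j:ZMod n)))
            + (χ 1 1 - χ ((j:ZMod n)+1) 1 + χ (j:ZMod n) 1) = _
        abel
    _ = 0 := by
        rw [Finset.sum_add_distrib, Finset.sum_sub_distrib, Finset.sum_sub_distrib, t1, t2]
        abel

lemma e_zero_B3t (zz : C21 n × C12 n) (hW : zz ∈ Wms n) (he : eHom n zz = 0) : zz ∈ B3t n := by
  obtain ⟨hz, hδ⟩ := (Wms_iff n zz).mp hW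
  obtain ⟨χ, hχ0, hχd, hgval, htor, hnm, hlast⟩ := Z3t_red n zz hz
  set h : ZMod n → ZMod n → 𝕋 := fun x y => zz.2 1 x y + (χ 1 y - χ 1 (x + y) + χ 1 x)
    with hhdef
  have hhc : ∀ x y y', h y y' - h (x+y) y' + h x (y+y') - h x y = 0 := by
    intro x y y'
    have hb := hδ 1 x y y'
    simp only [hhdef, ← add_assoc]
    linear_combination (norm := abel) hb
  have hn1 : ∀ x, h x 0 = 0 := fun x => hnm x 0 (Or.inr rfl)
  have hS : (∑ j ∈ Finset.range n, h (j:ZMod n) 1) = 0 := by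
    have h1 : (∑ j ∈ Finset.range n, h (j:ZMod n) 1) = eHom n zz := hlast
    rw [h1, he]
  set R : ZMod n → 𝕋 := fun x => ∑ j ∈ Finset.range x.val, h (j:ZMod n) 1 with hRdef
  have hd2 : ∀ x y, h x y = R (x+y) - R x - R y := by
    intro x y
    have hh := deg2 n h hn1 hhc x y
    rw [hS, smul_zero, add_zero] at hh
    exact hh
  have hRtor : ∀ x, n • R x = 0 := by
    intro x
    show n • (∑ j ∈ Finset.range x.val, h (j:ZMod n) 1) = 0
    rw [Finset.smul_sum]
    exact Finset.sum_eq_zero fun j _ => htor _ _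
  refine AddSubgroup.mem_map.mpr ⟨(χ + fun g x => g.val • R x, 0), ?_, ?_⟩
  · rw [mem_nrm2_iff]
    constructor
    · intro g k hgk
      show χ g k + g.val • R k = 0
      rcases hgk with rfl | rfl
      · rw [hχ0 0 k (Or.inl rfl), ZMod.val_zero, zero_smul, add_zero]
      · rw [hχ0 g 0 (Or.inr rfl)]
        have hR0 : R 0 = 0 := by
          show (∑ j ∈ Finset.range (0 : ZMod n).val, h (j:ZMod n) 1) = 0
          rw [ZMod.val_zero, Finset.range_zero, Finset.sum_empty]
        rw [hR0, smul_zero, add_zero]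
    · intro x y _
      rfl
  · refine Prod.ext ?_ ?_
    · funext g₁ g₂ k
      show (χ g₂ k + g₂.val • R k) - (χ (g₁+g₂) k + (g₁+g₂).val • R k)
          + (χ g₁ k + g₁.val • R k) = zz.1 g₁ g₂ k
      have hval := val_add_eps n g₁ g₂
      have hkey : g₂.val • R k + g₁.val • R k = (g₁+g₂).val • R k := by
        rw [← add_nsmul, show g₂.val + g₁.val = (g₁+g₂).val + n * eps n g₁ g₂ by omega,
          add_nsmul, mul_comm n (eps n g₁ g₂), mul_smul, hRtor k, smul_zero, add_zero]
      have hd := hχd g₁ g₂ k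
      linear_combination (norm := abel) hd + hkey
    · funext g x y
      show (0 : 𝕋) - (0 : 𝕋) - ((χ g y + g.val • R y) - (χ g (x+y) + g.val • R (x+y))
          + (χ g x + g.val • R x)) = zz.2 g x y
      have hval := hgval g x y
      have hsm : g.val • h x y = g.val • R (x+y) - g.val • R x - g.val • R y := by
        rw [hd2 x y, smul_sub, smul_sub]
      linear_combination (norm := abel) - hval - hsm

def ebar : H3t n →+ torSub n :=
  QuotientAddGroup.lift _ (eZh n) (by
    intro z hzB
    rw [AddMonoidHom.mem_ker]
    apply Subtype.ext
    show eHom n (z : C21 n × C12 n) = 0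
    exact e_B3t n _ (AddSubgroup.mem_addSubgroupOf.mp hzB))

lemma ebar_mk (z : Z3t n) : ebar n (QuotientAddGroup.mk z) = eZh n z := rfl

def MSh : (MS n) →+ torSub n := (ebar n).comp (MS n).subtype

def betaS (t : 𝕋) : C21 n × C12 n := (0, fun g x y => (g.val * eps n x y) • t)

lemma betaS_Wms (t : 𝕋) (ht : n • t = 0) : betaS n t ∈ Wms n := by
  rw [Wms_iff, Z3t_iff]
  refine ⟨⟨?_, ?_, ?_, ?_⟩, ?_⟩
  · intro g₁ g₂ k _
    rfl
  · intro g x y hh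
    rcases hh with rfl | rfl | rfl
    · show ((0:ZMod n).val * eps n x y) • t = 0
      rw [ZMod.val_zero, zero_mul, zero_smul]
    · show (g.val * eps n 0 y) • t = 0
      rw [eps_zero_left, mul_zero, zero_smul]
    · show (g.val * eps n x 0) • t = 0
      rw [eps_zero_right, mul_zero, zero_smul]
  · intro g₁ g₂ g₃ k
    show (0:𝕋) - 0 + 0 - 0 = 0
    abel
  · intro g₁ g₂ x y
    show ((0:𝕋) - 0 + 0) + ((g₂.val * eps n x y) • t - ((g₁+g₂).val * eps n x y) • t
        + (g₁.val * eps n x y) • t) = 0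
    have hval := val_add_eps n g₁ g₂
    have key : (g₂.val * eps n x y) • t + (g₁.val * eps n x y) • t
        = ((g₁+g₂).val * eps n x y) • t := by
      rw [← add_nsmul, ← Nat.add_mul,
        show g₂.val + g₁.val = (g₁+g₂).val + n * eps n g₁ g₂ by omega, Nat.add_mul]
      rw [show n * eps n g₁ g₂ * eps n x y = eps n g₁ g₂ * eps n x y * n by ring]
      rw [add_nsmul, mul_smul, mul_smul, ht, smul_zero, add_zero]
    linear_combination (norm := abel) key
  · intro g x y y'
    show (g.val * eps n y y') • t - (g.val * eps n (x+y) y') • t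
        + (g.val * eps n x (y+y')) • t - (g.val * eps n x y) • t = 0
    have hep := eps_cocycle n x y y'
    have key : (g.val * eps n y y') • t + (g.val * eps n x (y+y')) • t
        = (g.val * eps n x y) • t + (g.val * eps n (x+y) y') • t := by
      rw [← add_nsmul, ← add_nsmul, ← Nat.mul_add, ← Nat.mul_add, hep]
    linear_combination (norm := abel) key

lemma betaS_e (t : 𝕋) (ht : n • t = 0) : eHom n (betaS n t) = t := by
  show (∑ j ∈ Finset.range n, ((((1:ZMod n)).val * eps n (j:ZMod n) 1) • t
      + (0 : C21 n) (j:ZMod n) 1 1)) = t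
  simp only [Pi.zero_apply, add_zero]
  exact sum_eps_smul n t ht

lemma MSh_bij : Function.Bijective (MSh n) := by
  constructor
  · rw [injective_iff_map_eq_zero]
    rintro ⟨q, hq⟩ h0
    obtain ⟨z, hzW, hzq⟩ := hq
    apply Subtype.ext
    show q = 0
    rw [← hzq]
    have h0' : ebar n q = 0 := h0
    rw [← hzq] at h0'
    have hE : eHom n (z : C21 n × C12 n) = 0 := congrArg Subtype.val h0'
    have hB : (z : C21 n × C12 n) ∈ B3t n :=
      e_zero_B3t n _ (AddSubgroup.mem_addSubgroupOf.mp hzW) hE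
    exact (QuotientAddGroup.eq_zero_iff z).mpr (AddSubgroup.mem_addSubgroupOf.mpr hB)
  · rintro ⟨t, ht⟩
    have hW := betaS_Wms n t ht
    have zmem : betaS n t ∈ Z3t n := ((Wms_iff n _).mp hW).1
    refine ⟨⟨QuotientAddGroup.mk ⟨betaS n t, zmem⟩, mk_mem_MS n ⟨betaS n t, zmem⟩ hW⟩, ?_⟩
    apply Subtype.ext
    show eHom n (betaS n t) = t
    exact betaS_e n t ht

def i2E : (MS n) ≃+ ZMod n :=
  (AddEquiv.ofBijective (MSh n) (MSh_bij n)).trans (eT n).symm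

lemma i2E_mk (z : Z3t n) (hm : (QuotientAddGroup.mk z : H3t n) ∈ MS n) :
    i2E n ⟨QuotientAddGroup.mk z, hm⟩
      = (eT n).symm ⟨eHom n (z : C21 n × C12 n), e_tor n z⟩ :=
  congrArg (eT n).symm (Subtype.ext rfl)

/- ### The Dijkgraaf–Pasquier–Roche pair -/

lemma dpr_Z3t (w : C3G n) (hw : w ∈ Z3G n) : (alphaW n w, betaW n w) ∈ Z3t n := by
  obtain ⟨hw0, hcoc⟩ := (Z3G_iff n w).mp hw
  have hA : ∀ b c, w 0 b c = 0 := fun b c => hw0 0 b c (Or.inl rfl)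
  have hB : ∀ a c, w a 0 c = 0 := fun a c => hw0 a 0 c (Or.inr (Or.inl rfl))
  have hC : ∀ a b, w a b 0 = 0 := fun a b => hw0 a b 0 (Or.inr (Or.inr rfl))
  rw [Z3t_iff]
  refine ⟨?_, ?_, ?_, ?_⟩
  · intro g₁ g₂ k hh
    rcases hh with rfl | rfl | rfl <;> simp [alphaW, hA, hB, hC]
  · intro g x y hh
    rcases hh with rfl | rfl | rfl <;> simp [betaW, hA, hB, hC]
  · intro g₁ g₂ g₃ k
    have h1 := hcoc g₁ g₂ g₃ k
    have h2 := hcoc g₁ g₂ k g₃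
    have h3 := hcoc g₁ k g₂ g₃
    have h4 := hcoc k g₁ g₂ g₃
    rw [show k + g₃ = g₃ + k from add_comm _ _] at h2
    rw [show k + g₂ = g₂ + k from add_comm _ _] at h3
    rw [show k + g₁ = g₁ + k from add_comm _ _] at h4
    simp only [alphaW]
    linear_combination (norm := abel) h1 - h2 + h3 - h4
  · intro g₁ g₂ x y
    have h1 := hcoc g₁ g₂ x y
    have h2 := hcoc g₁ x g₂ y
    have h3 := hcoc x g₁ g₂ y
    have h4 := hcoc g₁ x y g₂
    have h5 := hcoc x g₁ y g₂
    have h6 := hcoc x y g₁ g₂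
    rw [show x + g₂ = g₂ + x from add_comm _ _] at h2
    rw [show x + g₁ = g₁ + x from add_comm _ _] at h3
    rw [show y + g₂ = g₂ + y from add_comm _ _] at h4
    rw [show x + g₁ = g₁ + x from add_comm _ _, show y + g₂ = g₂ + y from add_comm _ _] at h5
    rw [show y + g₁ = g₁ + y from add_comm _ _] at h6
    simp only [alphaW, betaW]
    linear_combination (norm := abel) h1 - h2 + h3 + h4 - h5 + h6

lemma dpr_Wms (w : C3G n) (hw : w ∈ Z3G n) : (alphaW n w, betaW n w) ∈ Wms n := by
  obtain ⟨hw0, hcoc⟩ := (Z3G_iff n w).mp hw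
  rw [Wms_iff]
  refine ⟨dpr_Z3t n w hw, ?_⟩
  intro g x y y'
  have h1 := hcoc g x y y'
  have h2 := hcoc x g y y'
  have h3 := hcoc x y g y'
  have h4 := hcoc x y y' g
  rw [show x + g = g + x from add_comm _ _] at h2
  rw [show y + g = g + y from add_comm _ _] at h3
  rw [show y' + g = g + y' from add_comm _ _] at h4
  simp only [betaW]
  linear_combination (norm := abel) h2 + h4 - h1 - h3

lemma dpr_e (w : C3G n) : eHom n (alphaW n w, betaW n w) = 2 • EEhom n w := by
  show (∑ j ∈ Finset.range n, (betaW n w 1 (j:ZMod n) 1 + alphaW n w (j:ZMod n) 1 1))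
      = 2 • ∑ j ∈ Finset.range n, w 1 (j:ZMod n) 1
  rw [Finset.smul_sum]
  refine Finset.sum_congr rfl fun j _ => ?_
  simp only [alphaW, betaW]
  rw [two_nsmul]
  abel

end Main


/-- Let `G = K = ℤ/n` act on itself by conjugation (trivially).
Under identifications `H³(ℤ/n,𝕋) ≅ ℤ/n` and `MS_G(G) ≅ ℤ/n`, the composite
`φ ∘ τ₁* : H³(G,𝕋) → MS_G(G)` (sending the class of `w` to the class of the
Dijkgraaf–Pasquier–Roche pair `(α_w, β_w)`) is multiplication by `2`. In particular,
for `n` odd this composite is an isomorphism, and for `n` even the class `n/2` maps to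
zero. -/
theorem stmt_19 :
    ∃ (i₁ : H3G n ≃+ ZMod n) (i₂ : (MS n) ≃+ ZMod n),
      (∀ (w : C3G n) (hw : w ∈ Z3G n),
        ∃ (hz : (alphaW n w, betaW n w) ∈ Z3t n)
          (hm : (QuotientAddGroup.mk (⟨(alphaW n w, betaW n w), hz⟩ : Z3t n) :
              H3t n) ∈ MS n),
          i₂ ⟨QuotientAddGroup.mk ⟨(alphaW n w, betaW n w), hz⟩, hm⟩ =
            2 * i₁ (QuotientAddGroup.mk ⟨w, hw⟩)) ∧
      (Odd n →
        (∀ y : MS n, ∃ (w : C3G n) (hw : w ∈ Z3G n)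
            (hz : (alphaW n w, betaW n w) ∈ Z3t n)
            (hm : (QuotientAddGroup.mk (⟨(alphaW n w, betaW n w), hz⟩ : Z3t n) :
                H3t n) ∈ MS n),
            (⟨QuotientAddGroup.mk ⟨(alphaW n w, betaW n w), hz⟩, hm⟩ : MS n) = y) ∧
        (∀ (w w' : C3G n) (hw : w ∈ Z3G n) (hw' : w' ∈ Z3G n)
            (hz : (alphaW n w, betaW n w) ∈ Z3t n)
            (hz' : (alphaW n w', betaW n w') ∈ Z3t n),
            (QuotientAddGroup.mk (⟨(alphaW n w, betaW n w), hz⟩ : Z3t n) : H3t n) =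
              QuotientAddGroup.mk ⟨(alphaW n w', betaW n w'), hz'⟩ →
            (QuotientAddGroup.mk (⟨w, hw⟩ : Z3G n) : H3G n) =
              QuotientAddGroup.mk ⟨w', hw'⟩)) ∧
      (Even n →
        ∀ (w : C3G n) (hw : w ∈ Z3G n) (hz : (alphaW n w, betaW n w) ∈ Z3t n),
          i₁ (QuotientAddGroup.mk ⟨w, hw⟩) = ((n / 2 : ℕ) : ZMod n) →
          (QuotientAddGroup.mk (⟨(alphaW n w, betaW n w), hz⟩ : Z3t n) : H3t n) = 0) := by
  refine ⟨i1E n, i2E n, ?_, ?_, ?_⟩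
  · -- multiplication by 2
    intro w hw
    have hz := dpr_Z3t n w hw
    refine ⟨hz, mk_mem_MS n ⟨(alphaW n w, betaW n w), hz⟩ (dpr_Wms n w hw), ?_⟩
    rw [i2E_mk, i1E_mk]
    have hpair : (⟨eHom n (alphaW n w, betaW n w),
          e_tor n ⟨(alphaW n w, betaW n w), hz⟩⟩ : torSub n)
        = 2 • (⟨EEhom n w, EE_tor n w hw⟩ : torSub n) :=
      Subtype.ext (dpr_e n w)
    rw [hpair, map_nsmul, nsmul_eq_mul]
    norm_num
  · -- odd case
    intro hodd
    have h2u : (2 : ZMod n) * (2 : ZMod n)⁻¹ = 1 := by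
      have hc : Nat.Coprime 2 n := Nat.coprime_two_left.mpr hodd
      have h := ZMod.coe_mul_inv_eq_one (n := n) 2 hc
      simpa using h
    constructor
    · -- surjectivity
      intro y
      set k : ZMod n := (2 : ZMod n)⁻¹ * (i2E n y) with hkdef
      set m : 𝕋 := ((eT n k : torSub n) : 𝕋) with hmdef
      have hmt : n • m = 0 := (eT n k).2
      have hmem := omegaC_mem n m hmt
      refine ⟨omegaC n m, hmem, dpr_Z3t n _ hmem, mk_mem_MS n _ (dpr_Wms n _ hmem), ?_⟩
      apply (i2E n).injective
      rw [i2E_mk]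
      have hpair : (⟨eHom n (alphaW n (omegaC n m), betaW n (omegaC n m)),
            e_tor n ⟨(alphaW n (omegaC n m), betaW n (omegaC n m)), dpr_Z3t n _ hmem⟩⟩ : torSub n)
          = 2 • eT n k := by
        apply Subtype.ext
        show eHom n (alphaW n (omegaC n m), betaW n (omegaC n m)) = ((2 • eT n k : torSub n) : 𝕋)
        calc eHom n (alphaW n (omegaC n m), betaW n (omegaC n m))
            = 2 • EEhom n (omegaC n m) := dpr_e n _
          _ = 2 • m := by rw [EE_omegaC n m hmt]
          _ = _ := rfl
      rw [hpair, map_nsmul, AddEquiv.symm_apply_apply, nsmul_eq_mul, hkdef]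
      push_cast
      rw [← mul_assoc, h2u, one_mul]
    · -- injectivity
      intro w w' hw hw' hz hz' hq
      have hE : eHom n (alphaW n w, betaW n w) = eHom n (alphaW n w', betaW n w') := by
        have h1 := congrArg (ebar n) hq
        rw [ebar_mk, ebar_mk] at h1
        exact congrArg Subtype.val h1
      rw [dpr_e, dpr_e] at hE
      have h2T : (2 • (⟨EEhom n w, EE_tor n w hw⟩ : torSub n) : torSub n)
          = 2 • (⟨EEhom n w', EE_tor n w' hw'⟩ : torSub n) := Subtype.ext hE
      have h3 := congrArg (eT n).symm h2T
      rw [map_nsmul, map_nsmul, nsmul_eq_mul, nsmul_eq_mul] at h3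
      have hu : IsUnit (2 : ZMod n) := isUnit_iff_exists_inv.mpr ⟨_, h2u⟩
      have h4 : (eT n).symm ⟨EEhom n w, EE_tor n w hw⟩
          = (eT n).symm ⟨EEhom n w', EE_tor n w' hw'⟩ := by
        apply hu.mul_left_cancel
        exact_mod_cast h3
      have h5 : (⟨EEhom n w, EE_tor n w hw⟩ : torSub n) = ⟨EEhom n w', EE_tor n w' hw'⟩ :=
        (eT n).symm.injective h4
      have hEE : EEhom n w = EEhom n w' := congrArg Subtype.val h5
      rw [QuotientAddGroup.eq]
      apply AddSubgroup.mem_addSubgroupOf.mpr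
      show -w + w' ∈ B3G n
      apply EE_zero_mem n _ ((Z3G n).add_mem ((Z3G n).neg_mem hw) hw')
      rw [map_add, map_neg, hEE, neg_add_cancel]
  · -- even case
    intro heven w hw hz hhalf
    rw [i1E_mk] at hhalf
    have hTT : (⟨EEhom n w, EE_tor n w hw⟩ : torSub n) = eT n ((n / 2 : ℕ) : ZMod n) := by
      rw [← hhalf, AddEquiv.apply_symm_apply]
    have h2m : 2 • EEhom n w = 0 := by
      have h1 : (2 • (⟨EEhom n w, EE_tor n w hw⟩ : torSub n) : torSub n)
          = 2 • eT n ((n/2 : ℕ) : ZMod n) := by rw [hTT]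
      have h2 : (2 • eT n ((n/2 : ℕ) : ZMod n) : torSub n)
          = eT n (((2 * (n/2) : ℕ)) : ZMod n) := by
        rw [← map_nsmul]
        congr 1
        rw [nsmul_eq_mul]
        push_cast
        ring
      have h3 : ((2 * (n/2) : ℕ) : ZMod n) = 0 := by
        rw [show 2 * (n/2) = n from by obtain ⟨r, hr⟩ := heven; omega]
        exact ZMod.natCast_self n
      rw [h2, h3, map_zero] at h1
      exact congrArg Subtype.val h1
    have he0 : eHom n (alphaW n w, betaW n w) = 0 := by
      rw [dpr_e]; exact h2m
    rw [QuotientAddGroup.eq_zero_iff]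
    exact AddSubgroup.mem_addSubgroupOf.mpr (e_zero_B3t n _ (dpr_Wms n w hw) he0)


end Stmt19

end
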